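/- Let m, ε ∈ ℝ with m ≠ 0 and ε = 1 or ε = -1. Let ψ, ρ : ℝ → ℝ be differentiable functions such that for all u ∈ ℝ: deriv ψ u = ρ u, ε * deriv ρ u = m² * ψ u, and ε * (ρ u)² + (1/2) * m² * (ψ u)² = 0. Then ψ u = 0 for all u ∈ ℝ. -/

import Mathlib

/-- The key analytic step for massive scalar fields: if `ψ' = ρ`, `ε ρ' = m² ψ` and
`ε ρ² + ½ m² ψ² = 0` with `m ≠ 0` and `ε = ±1`, then `ψ ≡ 0`. -/
theorem massive_scalar_field_constraint_forces_zero
    (m ε : ℝ) (hm : m ≠ 0) (hε : ε = 1 ∨ ε = -1)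
    (ψ ρ : ℝ → ℝ) (hψ : Differentiable ℝ ψ) (hρ : Differentiable ℝ ρ)
    (h1 : ∀ u : ℝ, deriv ψ u = ρ u)
    (h2 : ∀ u : ℝ, ε * deriv ρ u = m ^ 2 * ψ u)
    (h3 : ∀ u : ℝ, ε * (ρ u) ^ 2 + (1 / 2) * m ^ 2 * (ψ u) ^ 2 = 0) :
    ∀ u : ℝ, ψ u = 0 := by
  have hε2 : ε * ε = 1 := by rcases hε with h | h <;> rw [h] <;> ring
  have key : ∀ u : ℝ, ψ u * ρ u = 0 := by
    intro u
    have hF : (fun u => ε * (ρ u) ^ 2 + (1 / 2) * m ^ 2 * (ψ u) ^ 2) = fun _ => (0 : ℝ) :=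
      funext h3
    have hd0 : deriv (fun u => ε * (ρ u) ^ 2 + (1 / 2) * m ^ 2 * (ψ u) ^ 2) u = 0 := by
      rw [hF]; simp
    have hD : HasDerivAt (fun u => ε * (ρ u) ^ 2 + (1 / 2) * m ^ 2 * (ψ u) ^ 2)
        (ε * (2 * ρ u * deriv ρ u) + (1 / 2) * m ^ 2 * (2 * ψ u * deriv ψ u)) u := by
      have hρ' := ((hρ u).hasDerivAt.pow 2).const_mul ε
      have hψ' := ((hψ u).hasDerivAt.pow 2).const_mul ((1 / 2) * m ^ 2)
      simpa [mul_comm, mul_assoc, mul_left_comm, Pi.add_def] using hρ'.add hψ'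
    have := hD.deriv
    rw [hd0] at this
    have h2u := h2 u
    have h1u := h1 u
    have hm2 : m ^ 2 ≠ 0 := pow_ne_zero 2 hm
    -- from this: 2ε ρ ρ' + m² ψ ψ' = 0; with ε ρ' = m² ψ, ψ' = ρ ⇒ 3 m² ψ ρ = 0
    have hρd : deriv ρ u = ε * (m ^ 2 * ψ u) := by
      calc deriv ρ u = ε * ε * deriv ρ u := by rw [hε2, one_mul]
        _ = ε * (m ^ 2 * ψ u) := by rw [mul_assoc, h2u]
    rw [h1u, hρd] at this
    have h3m : 3 * (m ^ 2 * (ψ u * ρ u)) = 0 := by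
      linear_combination (-1 : ℝ) * this + (-2 * m ^ 2 * ψ u * ρ u) * hε2
    have := mul_eq_zero.mp h3m
    rcases this with h | h
    · norm_num at h
    · exact (mul_eq_zero.mp h).resolve_left hm2
  intro u
  have h3u := h3 u
  have hk := key u
  have hm2 : (0:ℝ) < m ^ 2 := by positivity
  rcases mul_eq_zero.mp hk with h | h
  · exact h
  · rw [h] at h3u
    have h4 : m ^ 2 * ψ u ^ 2 = 0 := by nlinarith [h3u]
    have h5 : ψ u ^ 2 = 0 := (mul_eq_zero.mp h4).resolve_left (ne_of_gt hm2)
    exact pow_eq_zero_iff two_ne_zero |>.mp h5
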